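/- Let ε ≥ 0 and let a, b ∈ ℝ satisfy |a − b| ≤ 1. Define q(t) = exp(εt/2)/(exp(εt/2) + 1). Then q(a) ≤ e^{ε/2}·q(b) and 1 − q(a) ≤ e^{ε/2}·(1 − q(b)). -/

import Mathlib

/-- The randomized-test release probability `q(t) = exp(εt/2)/(exp(εt/2)+1)` changes by at
most a factor `e^{ε/2}` (in both directions `q` and `1 - q`) when its argument changes by at
most `1`. -/
theorem relProb_private {ε a b : ℝ} (hε : 0 ≤ ε) (hab : |a - b| ≤ 1) :
    Real.exp (ε * a / 2) / (Real.exp (ε * a / 2) + 1)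
        ≤ Real.exp (ε / 2) * (Real.exp (ε * b / 2) / (Real.exp (ε * b / 2) + 1)) ∧
      1 - Real.exp (ε * a / 2) / (Real.exp (ε * a / 2) + 1)
        ≤ Real.exp (ε / 2) * (1 - Real.exp (ε * b / 2) / (Real.exp (ε * b / 2) + 1)) := by
  obtain ⟨h1, h2⟩ := abs_le.mp hab
  set x := Real.exp (ε * a / 2) with hx
  set y := Real.exp (ε * b / 2) with hy
  set e := Real.exp (ε / 2) with he
  have hxpos : 0 < x := Real.exp_pos _
  have hypos : 0 < y := Real.exp_pos _
  have hepos : 0 < e := Real.exp_pos _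
  have he1 : 1 ≤ e := Real.one_le_exp (by positivity)
  have hxey : x ≤ e * y := by
    rw [hx, hy, he, ← Real.exp_add]
    apply Real.exp_le_exp.mpr
    nlinarith
  have hyex : y ≤ e * x := by
    rw [hx, hy, he, ← Real.exp_add]
    apply Real.exp_le_exp.mpr
    nlinarith
  constructor
  · rw [div_le_iff₀ (by positivity), mul_comm (e : ℝ), mul_assoc, div_mul_eq_mul_div,
      le_div_iff₀ (by positivity)]
    nlinarith
  · have l : 1 - x / (x + 1) = 1 / (x + 1) := by field_simp; ring
    have r : 1 - y / (y + 1) = 1 / (y + 1) := by field_simp; ring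
    rw [l, r, div_le_iff₀ (by positivity), mul_comm (e : ℝ), mul_assoc, div_mul_eq_mul_div,
      le_div_iff₀ (by positivity)]
    nlinarith
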